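/- arXiv:1511.01378 — 3 statements merged into one kernel-verified Lean document; each statement's English description precedes it below -/
import Mathlib

section
/- Let A be a commutative ring of characteristic zero and consider the connection ∇ = d + Γ_{-r} t^{-r} dt + (lower order terms) on V = A((t))^⊕n, where r > 1 and Γ_{-r} ∈ Mat_n(A) is an invertible matrix. Then for Λ = A[[t]]^⊕n and any integer s, the map ∇: t^{-s}Λ → t^{-r-s}Λ dt is a quasi-isomorphism (an isomorphism of the associated two-term complexes); consequently the de Rham cohomology H^*_dR of this differential module vanishes, i.e. the connection is Fredholm with vanishing cohomology. -/
open HahnSeries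

/-- The formal derivative `d/dt` on Laurent series, as an `A`-linear map. -/
noncomputable def lderiv (A : Type*) [CommRing A] : LaurentSeries A →ₗ[A] LaurentSeries A where
  toFun f :=
    { coeff := fun n => (n + 1 : ℤ) • f.coeff (n + 1)
      isPWO_support' := by
        have hsub : (Function.support fun n : ℤ => (n + 1 : ℤ) • f.coeff (n + 1)) ⊆
            (fun m : ℤ => m - 1) '' f.support := by
          intro n hn
          refine ⟨n + 1, fun h0 => ?_, by ring⟩
          apply hn
          simp [h0]
        exact ((f.isPWO_support.image_of_monotoneOn
          (fun a _ b _ hab => sub_le_sub_right hab 1)).mono hsub) }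
  map_add' f g := by
    ext n
    simp [smul_add]
  map_smul' a f := by
    ext n
    simp only [HahnSeries.coeff_smul, RingHom.id_apply, zsmul_eq_mul, smul_eq_mul]
    push_cast
    ring

/-- The connection `∇ = d + Γ dt` (with `dt` suppressed) on `A((t))^{⊕ n}`,
given by a connection matrix `Γ` with Laurent series entries. -/
noncomputable def nablaFun {A : Type*} [CommRing A] {n : ℕ}
    (Γ : Matrix (Fin n) (Fin n) (LaurentSeries A)) :
    (Fin n → LaurentSeries A) → (Fin n → LaurentSeries A) :=
  fun v i => lderiv A (v i) + ∑ j, Γ i j * v j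

/-- `t^{s} A[[t]]^{⊕ n}` inside `A((t))^{⊕ n}`: the vectors all of whose coefficients
below `s` vanish. -/
def latticeSet (A : Type*) [CommRing A] (n : ℕ) (s : ℤ) : Set (Fin n → LaurentSeries A) :=
  {v | ∀ i, ∀ m : ℤ, m < s → (v i).coeff m = 0}

section Aux

variable {A : Type*} [CommRing A] {n : ℕ}

lemma lderiv_coeff (f : LaurentSeries A) (m : ℤ) :
    (lderiv A f).coeff m = (m + 1 : ℤ) • f.coeff (m + 1) := rfl

lemma mul_coeff_Icc (f g : LaurentSeries A) (a b m : ℤ)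
    (hf : ∀ x < a, f.coeff x = 0) (hg : ∀ x < b, g.coeff x = 0) :
    (f * g).coeff m = ∑ x ∈ Finset.Icc b (m - a), f.coeff (m - x) * g.coeff x := by
  classical
  have hinj : Function.Injective (fun x : ℤ => ((m - x, x) : ℤ × ℤ)) := by
    intro x y h
    exact (Prod.ext_iff.mp h).2
  rw [HahnSeries.coeff_mul]
  have hmap : ∑ ij ∈ (Finset.Icc b (m - a)).map ⟨fun x => (m - x, x), hinj⟩,
      f.coeff ij.1 * g.coeff ij.2 = ∑ x ∈ Finset.Icc b (m - a), f.coeff (m - x) * g.coeff x :=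
    Finset.sum_map _ _ _
  rw [← hmap]
  apply Finset.sum_subset
  · intro ij hij
    rw [Finset.mem_addAntidiagonal] at hij
    obtain ⟨h1, h2, h3⟩ := hij
    have hb : b ≤ ij.2 := by
      by_contra hcon; push_neg at hcon; exact h2 (hg _ hcon)
    have ha : a ≤ ij.1 := by
      by_contra hcon; push_neg at hcon; exact h1 (hf _ hcon)
    simp only [Finset.mem_map, Function.Embedding.coeFn_mk, Finset.mem_Icc]
    refine ⟨ij.2, ⟨hb, by omega⟩, ?_⟩
    rw [Prod.ext_iff]
    refine ⟨?_, rfl⟩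
    show m - ij.2 = ij.1
    omega
  · intro ij hij hnot
    simp only [Finset.mem_map, Function.Embedding.coeFn_mk, Finset.mem_Icc] at hij
    obtain ⟨x, hx, rfl⟩ := hij
    rw [Finset.mem_addAntidiagonal] at hnot
    by_cases h1 : f.coeff (m - x) = 0
    · rw [h1, zero_mul]
    by_cases h2 : g.coeff x = 0
    · rw [h2, mul_zero]
    exact absurd ⟨h1, h2, by ring⟩ hnot

lemma sum_coeff' {β : Type*} (s : Finset β) (f : β → LaurentSeries A) (m : ℤ) :
    (∑ j ∈ s, f j).coeff m = ∑ j ∈ s, (f j).coeff m :=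
  map_sum (HahnSeries.coeff.addMonoidHom m) f s

lemma nabla_coeff (r : ℤ) (Γ : Matrix (Fin n) (Fin n) (LaurentSeries A))
    (hpole : ∀ i j, ∀ m : ℤ, m < -r → (Γ i j).coeff m = 0)
    (b : ℤ) (v : Fin n → LaurentSeries A) (hv : ∀ i, ∀ x : ℤ, x < b → (v i).coeff x = 0)
    (i : Fin n) (m : ℤ) :
    (nablaFun Γ v i).coeff m = (m + 1 : ℤ) • (v i).coeff (m + 1) +
      ∑ x ∈ Finset.Icc b (m + r), ∑ j, (Γ i j).coeff (m - x) * (v j).coeff x := by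
  show ((lderiv A (v i) + ∑ j, Γ i j * v j)).coeff m = _
  rw [HahnSeries.coeff_add, lderiv_coeff, sum_coeff']
  congr 1
  rw [Finset.sum_congr rfl (fun j _ => mul_coeff_Icc (Γ i j) (v j) (-r) b m (hpole i j) (hv j)),
    Finset.sum_comm]
  rw [show m - -r = m + r by ring]

lemma nabla_mapsTo (r s : ℤ) (hr : 1 < r) (Γ : Matrix (Fin n) (Fin n) (LaurentSeries A))
    (hpole : ∀ i j, ∀ m : ℤ, m < -r → (Γ i j).coeff m = 0) :
    Set.MapsTo (nablaFun Γ) (latticeSet A n (-s)) (latticeSet A n (-(r + s))) := by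
  intro v hv i m hm
  rw [nabla_coeff r Γ hpole (-s) v hv i m]
  rw [hv i (m + 1) (by omega), smul_zero,
    Finset.Icc_eq_empty (by omega : ¬(-s ≤ m + r)), Finset.sum_empty, add_zero]

lemma nabla_sub (Γ : Matrix (Fin n) (Fin n) (LaurentSeries A))
    (v w : Fin n → LaurentSeries A) :
    nablaFun Γ (v - w) = nablaFun Γ v - nablaFun Γ w := by
  funext i
  simp only [nablaFun, Pi.sub_apply, map_sub, mul_sub, Finset.sum_sub_distrib]
  ring

lemma nabla_ker (r : ℤ) (hr : 1 < r) (Γ : Matrix (Fin n) (Fin n) (LaurentSeries A))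
    (hpole : ∀ i j, ∀ m : ℤ, m < -r → (Γ i j).coeff m = 0)
    (hlead : IsUnit (Matrix.of fun i j => (Γ i j).coeff (-r)))
    (v : Fin n → LaurentSeries A) (h : nablaFun Γ v = 0) : v = 0 := by
  by_contra hv
  set T : Set ℤ := {m | ∃ i, (v i).coeff m ≠ 0} with hT
  have hTne : T.Nonempty := by
    obtain ⟨i, hi⟩ : ∃ i, v i ≠ 0 := by
      by_contra h'; push_neg at h'; exact hv (funext h')
    obtain ⟨m, hm⟩ := HahnSeries.support_nonempty_iff.2 hi
    exact ⟨m, i, hm⟩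
  have hbdd : BddBelow T := by
    obtain ⟨M, hM⟩ := Finset.exists_le (Finset.univ.image (fun i => -(v i).order))
    refine ⟨-M, fun m hm => ?_⟩
    obtain ⟨i, hi⟩ := hm
    by_contra hlt
    push_neg at hlt
    have hMi := hM (-(v i).order) (Finset.mem_image_of_mem _ (Finset.mem_univ i))
    exact hi (HahnSeries.coeff_eq_zero_of_lt_order (by omega))
  have hwf : T.IsWF := hbdd.wellFoundedOn_lt
  set k₀ := hwf.min hTne with hk
  have hlow : ∀ i, ∀ x : ℤ, x < k₀ → (v i).coeff x = 0 := by
    intro i x hx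
    by_contra h'
    exact absurd (hwf.min_le hTne ⟨i, h'⟩) (by omega)
  obtain ⟨i₀, hi₀⟩ := hwf.min_mem hTne
  have hcol : (Matrix.of fun i j => (Γ i j).coeff (-r)).mulVec
      (fun j => (v j).coeff k₀) = 0 := by
    funext i
    have h0 : (nablaFun Γ v i).coeff (-r + k₀) = 0 := by simp [h]
    rw [nabla_coeff r Γ hpole k₀ v hlow i (-r + k₀),
      hlow i (-r + k₀ + 1) (by omega), smul_zero, zero_add,
      show -r + k₀ + r = k₀ by ring, Finset.Icc_self, Finset.sum_singleton] at h0
    simp only [show -r + k₀ - k₀ = -r by ring] at h0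
    simpa [Matrix.mulVec, dotProduct] using h0
  obtain ⟨U, hU⟩ := hlead
  have hc : (fun j => (v j).coeff k₀) = 0 := by
    calc (fun j => (v j).coeff k₀)
        = (1 : Matrix (Fin n) (Fin n) A).mulVec (fun j => (v j).coeff k₀) :=
          (Matrix.one_mulVec _).symm
      _ = ((↑U⁻¹ * ↑U : Matrix (Fin n) (Fin n) A)).mulVec (fun j => (v j).coeff k₀) := by
          rw [U.inv_mul]
      _ = (↑U⁻¹ : Matrix (Fin n) (Fin n) A).mulVec
            ((Matrix.of fun i j => (Γ i j).coeff (-r)).mulVec (fun j => (v j).coeff k₀)) := by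
          rw [Matrix.mulVec_mulVec, hU]
      _ = 0 := by rw [hcol, Matrix.mulVec_zero]
  exact hi₀ (congrFun hc i₀)

noncomputable def seriesOf {A : Type*} [Zero A] (s : ℤ) (c : ℕ → A) : LaurentSeries A where
  coeff m := if h : -s ≤ m then c (m + s).toNat else 0
  isPWO_support' := by
    apply Set.IsWF.isPWO
    apply BddBelow.wellFoundedOn_lt
    refine ⟨-s, fun m hm => ?_⟩
    by_contra hlt
    push_neg at hlt
    exact hm (dif_neg (by omega))

lemma seriesOf_coeff_of_le {A : Type*} [Zero A] (s : ℤ) (c : ℕ → A) (m : ℤ) (h : -s ≤ m) :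
    (seriesOf s c).coeff m = c (m + s).toNat := dif_pos h

lemma seriesOf_coeff_of_lt {A : Type*} [Zero A] (s : ℤ) (c : ℕ → A) (m : ℤ) (h : m < -s) :
    (seriesOf s c).coeff m = 0 := dif_neg (by omega)

noncomputable def solveAux {A : Type*} [CommRing A] {n : ℕ} (r s : ℤ)
    (Γ : Matrix (Fin n) (Fin n) (LaurentSeries A)) (H : Matrix (Fin n) (Fin n) A)
    (w : Fin n → LaurentSeries A) : ℕ → Fin n → A
  | d => H.mulVec fun i =>
      (w i).coeff (-r - s + d) -
        (-r - s + d + 1 : ℤ) •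
          (if h : ((d : ℤ) + 1 - r).toNat < d ∧ (0 : ℤ) ≤ (d : ℤ) + 1 - r then
            solveAux r s Γ H w ((d : ℤ) + 1 - r).toNat i
          else 0) -
        ∑ e ∈ (Finset.range d).attach,
          ∑ j, (Γ i j).coeff (-r + ((d : ℤ) - (e : ℕ))) * solveAux r s Γ H w e j
  termination_by d => d
  decreasing_by
  · exact h.1
  · exact Finset.mem_range.mp e.2

lemma nabla_surjOn (r s : ℤ) (hr : 1 < r) (Γ : Matrix (Fin n) (Fin n) (LaurentSeries A))
    (hpole : ∀ i j, ∀ m : ℤ, m < -r → (Γ i j).coeff m = 0)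
    (hlead : IsUnit (Matrix.of fun i j => (Γ i j).coeff (-r))) :
    Set.SurjOn (nablaFun Γ) (latticeSet A n (-s)) (latticeSet A n (-(r + s))) := by
  intro w hw
  obtain ⟨U, hU⟩ := hlead
  set G : Matrix (Fin n) (Fin n) A := Matrix.of (fun i j => (Γ i j).coeff (-r)) with hG
  set H : Matrix (Fin n) (Fin n) A := (↑U⁻¹ : Matrix (Fin n) (Fin n) A) with hH
  have hGH : G * H = 1 := by rw [hH, ← hU]; exact U.mul_inv
  set u : ℕ → Fin n → A := solveAux r s Γ H w with hu
  set v : Fin n → LaurentSeries A := fun j => seriesOf s (fun d => u d j) with hvdef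
  have hvlat : ∀ i, ∀ x : ℤ, x < -s → (v i).coeff x = 0 := by
    intro i x hx
    simp only [hvdef]
    exact seriesOf_coeff_of_lt s _ x hx
  refine ⟨v, hvlat, ?_⟩
  funext i
  ext m
  by_cases hm : m < -(r + s)
  · rw [nabla_mapsTo r s hr Γ hpole hvlat i m hm, hw i m hm]
  · push_neg at hm
    obtain ⟨d, hd⟩ : ∃ d : ℕ, m = -r - s + (d : ℤ) := ⟨(m + r + s).toNat, by omega⟩
    subst hd
    rw [nabla_coeff r Γ hpole (-s) v hvlat i _]
    have hderiv : (v i).coeff (-r - s + (d : ℤ) + 1) =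
        (if h : ((d : ℤ) + 1 - r).toNat < d ∧ (0 : ℤ) ≤ (d : ℤ) + 1 - r then
          u (((d : ℤ) + 1 - r).toNat) i else 0) := by
      by_cases hc : (0 : ℤ) ≤ (d : ℤ) + 1 - r
      · rw [dif_pos ⟨by omega, hc⟩]
        simp only [hvdef]
        rw [seriesOf_coeff_of_le s _ _ (by omega)]
        congr 1
        omega
      · rw [dif_neg (fun hcon => hc hcon.2)]
        simp only [hvdef]
        exact seriesOf_coeff_of_lt s _ _ (by omega)
    have hud : ∀ i', G.mulVec (u d) i' = (w i').coeff (-r - s + (d : ℤ)) -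
        (-r - s + (d : ℤ) + 1 : ℤ) •
          (if h : ((d : ℤ) + 1 - r).toNat < d ∧ (0 : ℤ) ≤ (d : ℤ) + 1 - r then
            u (((d : ℤ) + 1 - r).toNat) i' else 0) -
        ∑ e ∈ Finset.range d, ∑ j, (Γ i' j).coeff (-r + ((d : ℤ) - (e : ℕ))) * u e j := by
      intro i'
      conv_lhs => rw [hu, solveAux]
      rw [← hu, Matrix.mulVec_mulVec, hGH, Matrix.one_mulVec]
      simp only [Finset.sum_attach (Finset.range d)
        (fun e => ∑ j, (Γ i' j).coeff (-r + ((d : ℤ) - (e : ℕ))) * u e j)]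
    have h1 : ∑ x ∈ Finset.Icc (-s) (-r - s + (d : ℤ) + r),
        ∑ j, (Γ i j).coeff (-r - s + (d : ℤ) - x) * (v j).coeff x
        = ∑ e ∈ Finset.range (d + 1),
            ∑ j, (Γ i j).coeff (-r + ((d : ℤ) - (e : ℕ))) * u e j := by
      refine Finset.sum_nbij' (fun x : ℤ => (x + s).toNat) (fun e : ℕ => -s + (e : ℤ))
        ?_ ?_ ?_ ?_ ?_
      · intro x hx
        rw [Finset.mem_Icc] at hx
        simp only [Finset.mem_range]
        omega
      · intro e he
        rw [Finset.mem_range] at he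
        simp only [Finset.mem_Icc]
        omega
      · intro x hx
        rw [Finset.mem_Icc] at hx
        omega
      · intro e _
        omega
      · intro x hx
        rw [Finset.mem_Icc] at hx
        refine Finset.sum_congr rfl fun j _ => ?_
        rw [show -r - s + (d : ℤ) - x = -r + ((d : ℤ) - (((x + s).toNat : ℕ) : ℤ)) by omega]
        simp only [hvdef]
        rw [seriesOf_coeff_of_le s _ x (by omega)]
    rw [h1, Finset.sum_range_succ]
    have hlast : ∑ j, (Γ i j).coeff (-r + ((d : ℤ) - ((d : ℕ) : ℤ))) * u d j
        = G.mulVec (u d) i := by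
      rw [show (-r + ((d : ℤ) - ((d : ℕ) : ℤ))) = -r by omega]
      simp [hG, Matrix.mulVec, dotProduct]
    rw [hlast, hud i, ← hderiv]
    ring

end Aux

/-- **Example \ref{e:invertible}** (irregular connections with invertible leading term are
Fredholm with vanishing cohomology).  Let `A` be a commutative ring of characteristic zero and
`∇ = d + Γ₋ᵣ t^{-r} dt + (lower order terms)` a connection on `A((t))^{⊕ n}` with `r > 1` and
invertible leading term `Γ₋ᵣ ∈ Matₙ(A)`.  Then for every integer `s`, `∇` maps
`t^{-s} Λ` bijectively onto `t^{-r-s} Λ dt` (for `Λ = A[[t]]^{⊕ n}`), and consequently the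
de Rham cohomology of this differential module vanishes, i.e. `∇ : V → V dt` is bijective. -/
theorem stmt_3 {A : Type*} [CommRing A] [CharZero A] {n : ℕ}
    (r : ℤ) (hr : 1 < r)
    (Γ : Matrix (Fin n) (Fin n) (LaurentSeries A))
    (hpole : ∀ i j, ∀ m : ℤ, m < -r → (Γ i j).coeff m = 0)
    (hlead : IsUnit (Matrix.of fun i j => (Γ i j).coeff (-r))) :
    (∀ s : ℤ, Set.BijOn (nablaFun Γ) (latticeSet A n (-s)) (latticeSet A n (-(r + s)))) ∧
      Function.Bijective (nablaFun Γ) := by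
  have hinj : Function.Injective (nablaFun Γ) := by
    intro v₁ v₂ h12
    have h0 : nablaFun Γ (v₁ - v₂) = 0 := by
      rw [nabla_sub, h12, sub_self]
    exact sub_eq_zero.mp (nabla_ker r hr Γ hpole hlead _ h0)
  refine ⟨fun s => ⟨nabla_mapsTo r s hr Γ hpole, hinj.injOn, nabla_surjOn r s hr Γ hpole hlead⟩,
    hinj, ?_⟩
  intro w
  obtain ⟨M, hM⟩ := Finset.exists_le (Finset.univ.image (fun i => -(w i).order))
  have hw : w ∈ latticeSet A n (-(r + (M - r))) := by
    intro i m hm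
    apply HahnSeries.coeff_eq_zero_of_lt_order
    have hMi := hM (-(w i).order) (Finset.mem_image_of_mem _ (Finset.mem_univ i))
    omega
  obtain ⟨v, -, hveq⟩ := nabla_surjOn r (M - r) hr Γ hpole hlead hw
  exact ⟨v, hveq⟩
end

section
/- In the polynomial ring R = B[{x_i}_{i∈I}] over an integral domain B (I any index set), if an ideal J̄ satisfies J̄ = J̄² and J̄ is contained in the ideal m generated by all the variables x_i, then J̄ = 0. -/
open MvPolynomial

/-- Degree of a monomial exponent vector. -/
private def mdeg {I : Type*} (d : I →₀ ℕ) : ℕ := d.sum fun _ e => e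

private lemma mdeg_add {I : Type*} (u v : I →₀ ℕ) : mdeg (u + v) = mdeg u + mdeg v := by
  simpa [mdeg] using Finsupp.sum_add_index' (fun _ => rfl) (fun _ a b => rfl)

/-- The ideal of polynomials whose coefficients vanish in all degrees `< n`. -/
private def lowVanish {B : Type*} [CommRing B] (I : Type*) (n : ℕ) :
    Ideal (MvPolynomial I B) where
  carrier := {p | ∀ d : I →₀ ℕ, mdeg d < n → coeff d p = 0}
  zero_mem' := by intro d _; simp
  add_mem' := by
    intro p q hp hq d hd
    simp [coeff_add, hp d hd, hq d hd]
  smul_mem' := by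
    classical
    intro q p hp d hd
    rw [smul_eq_mul, coeff_mul]
    refine Finset.sum_eq_zero ?_
    rintro ⟨u, v⟩ huv
    rw [Finset.HasAntidiagonal.mem_antidiagonal] at huv
    have hv : mdeg v < n := by
      have h := mdeg_add u v
      rw [huv] at h
      omega
    rw [hp v hv, mul_zero]

private lemma lowVanish_mul {B : Type*} [CommRing B] (I : Type*) (a b : ℕ) :
    lowVanish (B := B) I a * lowVanish (B := B) I b ≤ lowVanish (B := B) I (a + b) := by
  classical
  refine Ideal.mul_le.mpr ?_
  intro p hp q hq d hd
  rw [coeff_mul]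
  refine Finset.sum_eq_zero ?_
  rintro ⟨u, v⟩ huv
  rw [Finset.HasAntidiagonal.mem_antidiagonal] at huv
  have h := mdeg_add u v
  rw [huv] at h
  rcases lt_or_ge (mdeg u) a with hu | hu
  · rw [hp u hu, zero_mul]
  · have hv : mdeg v < b := by omega
    rw [hq v hv, mul_zero]

private lemma span_X_le_lowVanish {B : Type*} [CommRing B] (I : Type*) :
    Ideal.span (Set.range (MvPolynomial.X : I → MvPolynomial I B)) ≤
      lowVanish (B := B) I 1 := by
  classical
  rw [Ideal.span_le]
  rintro _ ⟨i, rfl⟩ d hd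
  rw [coeff_X']
  split_ifs with h
  · exfalso
    subst h
    simp [mdeg, Finsupp.sum_single_index] at hd
  · rfl

/-- **Key step of Lemma \ref{l:affine-fp}**: in the polynomial ring `R = B[{xᵢ}_{i ∈ I}]` over
an integral domain `B` (with `I` an arbitrary index set), if an ideal `J̄` satisfies
`J̄ = J̄²` and `J̄` is contained in the ideal generated by all the variables `xᵢ`,
then `J̄ = 0`. -/
theorem stmt_9 {B : Type*} [CommRing B] [IsDomain B] {I : Type*}
    (J : Ideal (MvPolynomial I B))
    (hsq : J = J * J)
    (hm : J ≤ Ideal.span (Set.range (MvPolynomial.X : I → MvPolynomial I B))) :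
    J = ⊥ := by
  have key : ∀ n : ℕ, J ≤ lowVanish (B := B) I n := by
    intro n
    induction n with
    | zero => intro p _ d hd; omega
    | succ n ih =>
      calc J = J * J := hsq
        _ ≤ lowVanish (B := B) I n * lowVanish (B := B) I 1 :=
          Ideal.mul_mono ih (le_trans hm (span_X_le_lowVanish I))
        _ ≤ lowVanish (B := B) I (n + 1) := lowVanish_mul I n 1
  refine (Submodule.eq_bot_iff J).mpr fun p hp => ?_
  ext d
  rw [coeff_zero]
  exact key (mdeg d + 1) hp d (by omega)
end

section
/- Let (A, ∗) be a monoidal stable category with a t-structure of finite homological dimension δ₁, such that the monoidal product is exact enough that the following makes sense, and let A be an associative algebra object of A with unit map 1_A → A. Suppose: A is connective-zero (lies in cohomological degrees ≥ 0) and right flat (A ∗ − is left t-exact); the cofiber J[1] := cofib(1_A → A) lies in degrees ≥ 0, is right flat, and is bounded above (lies in degrees ≤ δ₂ when shifted: J := fib(1_A → A) lies in degrees [1, δ₂+1]). Then for every i, the map J^{∗(i+δ₁+δ₂+2)} → J^{∗(i+1)} is nullhomotopic; equivalently, the tower i ↦ cofib(1_A → Tot^i A^{∗(•+1)}) ≅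 J^{∗(i+1)}[1] is (δ₁+δ₂+1)-nilpotent, so the monad defined by A is effective (the augmented cobar/totalization tower of the bar construction converges with uniform nilpotence). -/
open CategoryTheory CategoryTheory.Limits MonoidalCategory

universe v u

/-- The composite `X (i+n) ⟶ X i` of the transition maps of a tower. -/
def towerComp {C : Type u} [Category.{v} C] {X : ℕ → C}
    (f : ∀ i, X (i + 1) ⟶ X i) (i : ℕ) : ∀ n : ℕ, (X (i + n) ⟶ X i)
  | 0 => 𝟙 (X i)
  | n + 1 => f (i + n) ≫ towerComp f i n

/-- Monoidal powers `J^{⊗ m}` of an object `J` (with `J^{⊗0}` the unit). -/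
def monPow {C : Type u} [Category.{v} C] [MonoidalCategory C] (J : C) : ℕ → C
  | 0 => 𝟙_ C
  | m + 1 => monPow J m ⊗ J

/-- The transition maps `J^{⊗(m+1)} ⟶ J^{⊗m}` induced by a map `ε : J ⟶ 𝟙` (the inclusion
of the fiber `J = fib(𝟙 → A)` into the unit). -/
def monPowStep {C : Type u} [Category.{v} C] [MonoidalCategory C] (J : C) (ε : J ⟶ 𝟙_ C) :
    ∀ m : ℕ, monPow J (m + 1) ⟶ monPow J m :=
  fun m => (monPow J m ◁ ε) ≫ (ρ_ (monPow J m)).hom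


/-- Splitting iso `J^{⊗(i+n)} ≅ J^{⊗i} ⊗ J^{⊗n}`. -/
def splitIso {C : Type u} [Category.{v} C] [MonoidalCategory C] (J : C) (i : ℕ) :
    ∀ n : ℕ, monPow J (i + n) ≅ monPow J i ⊗ monPow J n
  | 0 => (ρ_ (monPow J i)).symm
  | n + 1 => (whiskerRightIso (splitIso J i n) J) ≪≫ α_ _ _ _

/-- The composite `J^{⊗n} ⟶ 𝟙` obtained by iterating the transition maps. -/
def gmap {C : Type u} [Category.{v} C] [MonoidalCategory C] (J : C) (ε : J ⟶ 𝟙_ C) :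
    ∀ n : ℕ, monPow J n ⟶ 𝟙_ C
  | 0 => 𝟙 _
  | n + 1 => monPowStep J ε n ≫ gmap J ε n

/-- The iterated transition map factors through whiskering by `gmap`. -/
lemma towerComp_eq {C : Type u} [Category.{v} C] [MonoidalCategory C] (J : C)
    (ε : J ⟶ 𝟙_ C) (i : ℕ) : ∀ n : ℕ,
    towerComp (monPowStep J ε) i n
      = (splitIso J i n).hom ≫ (monPow J i ◁ gmap J ε n) ≫ (ρ_ (monPow J i)).hom
  | 0 => by simp [towerComp, splitIso, gmap]; erw [MonoidalCategory.whiskerLeft_id, Category.id_comp, Iso.inv_hom_id]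
  | n + 1 => by
    have key : monPowStep J ε (i + n) ≫ (splitIso J i n).hom
        = ((splitIso J i n).hom ▷ J) ≫ ((monPow J i ⊗ monPow J n) ◁ ε)
            ≫ (ρ_ (monPow J i ⊗ monPow J n)).hom := by
      rw [monPowStep]; erw [Category.assoc]; rw [← whisker_exchange_assoc, rightUnitor_naturality]; rfl
    rw [towerComp, towerComp_eq J ε i n, ← Category.assoc, key]
    simp [splitIso, gmap, monPowStep, MonoidalCategory.whiskerLeft_comp]
    erw [Iso.trans_hom, whiskerRightIso_hom, MonoidalCategory.whiskerLeft_comp, MonoidalCategory.whiskerLeft_rightUnitor]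
    erw [Category.assoc, Category.assoc]
    exact (Category.assoc (obj := C) _ _ _).symm

/-- **Lemma \ref{l:effmonad-tstr}** (`t`-structures and effective monads): let `(A, ∗)` be a
monoidal stable category equipped with a `t`-structure of finite homological dimension `δ₁`
(modelled by classes `Ge a` = "degrees ≥ a" and `Le b` = "degrees ≤ b", with
`Hom(X, Y) = 0` whenever `X ∈ Ge a`, `Y ∈ Le b` and `a - b > δ₁`, the unit in degrees `≥ 0`,
and the monoidal product adding lower degree bounds — this last encodes connectivity plus
(right) flatness of `A` and of `cofib(𝟙 → A)`).  Let `A` be an algebra whose unit map has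
fiber `J := fib(𝟙_A → A)` lying in degrees `[1, δ₂ + 1]` (i.e. `cofib(𝟙 → A)` lies in
degrees `[0, δ₂]` and is bounded above).  Then for every `i`, the map
`J^{∗(i+δ₁+δ₂+2)} ⟶ J^{∗(i+1)}` (induced by `ε : J ⟶ 𝟙`) is nullhomotopic; equivalently the
tower `i ↦ cofib(𝟙 → Tot^i A^{∗(•+1)}) ≅ J^{∗(i+1)}[1]` is `(δ₁+δ₂+1)`-nilpotent, so the
monad defined by `A` is effective. -/
theorem stmt_14 {C : Type u} [Category.{v} C] [Preadditive C] [MonoidalCategory C]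
    [MonoidalPreadditive C]
    (Ge Le : ℤ → Set C) (δ₁ δ₂ : ℕ)
    (hGeMono : ∀ {a b : ℤ}, a ≤ b → Ge b ⊆ Ge a)
    (hLeMono : ∀ {a b : ℤ}, a ≤ b → Le a ⊆ Le b)
    (hvanish : ∀ (a b : ℤ) (X Y : C), X ∈ Ge a → Y ∈ Le b → (δ₁ : ℤ) < a - b →
      ∀ φ : X ⟶ Y, φ = 0)
    (htens : ∀ (a b : ℤ) (X Y : C), X ∈ Ge a → Y ∈ Ge b → (X ⊗ Y) ∈ Ge (a + b))
    (hunit : 𝟙_ C ∈ Ge 0)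
    (J : C) (ε : J ⟶ 𝟙_ C)
    (hJge : J ∈ Ge 1) (hJle : J ∈ Le ((δ₂ : ℤ) + 1)) :
    ∀ i : ℕ, towerComp (monPowStep J ε) (i + 1) (δ₁ + δ₂ + 1) = 0 := by
  -- powers of `J` lie in high degrees
  have hpow : ∀ m : ℕ, monPow J m ∈ Ge (m : ℤ) := by
    intro m
    induction m with
    | zero => exact hunit
    | succ m ih =>
      have := htens (m : ℤ) 1 _ _ ih hJge
      rw [show ((m : ℤ) + 1) = ((m + 1 : ℕ) : ℤ) by push_cast; ring] at this
      exact this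
  intro i
  set n : ℕ := δ₁ + δ₂ + 1 with hn
  -- the composite `J ⊗ J^{⊗n} ⟶ J ⊗ 𝟙 ⟶ J` vanishes for degree reasons
  have hzero : (J ◁ gmap J ε n) ≫ (ρ_ J).hom = 0 := by
    refine hvanish (1 + (n : ℤ)) ((δ₂ : ℤ) + 1) _ _ ?_ hJle ?_ _
    · exact htens 1 (n : ℤ) _ _ hJge (hpow n)
    · push_cast [hn]; omega
  have hzero' : (J ◁ gmap J ε n) = 0 := by
    have := congrArg (fun φ => φ ≫ (ρ_ J).inv) hzero
    simpa using this
  -- hence the whiskered map vanishes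
  have hwhisk : (monPow J (i + 1) ◁ gmap J ε n) = 0 := by
    show ((monPow J i ⊗ J) ◁ gmap J ε n) = 0
    rw [tensor_whiskerLeft, hzero']
    simp
  rw [towerComp_eq, hwhisk]
  simp
end
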